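/- Let F be a finite simple graph with vertex set {1,…,k} and e(F) > 0, let 0 < p ≤ 1, and let W be a graphon. If Ψ_{F,W}(x₁,…,x_k) = p^{e(F)} for almost every (x₁,…,x_k) ∈ [0,1]^k (with respect to Lebesgue measure), then W(x,y) = p for almost every (x,y) ∈ [0,1]². -/

import Mathlib

open MeasureTheory

open scoped Classical in
/-- `Ψ_{F,W}(x₁,…,x_k) = ∏_{ij ∈ E(F)} W(x_i, x_j)`, the product being over the
edges of `F` (each edge taken once, as a pair `i < j`). -/
noncomputable def psi {k : ℕ} (F : SimpleGraph (Fin k)) (W : ℝ → ℝ → ℝ)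
    (x : Fin k → ℝ) : ℝ :=
  ∏ e ∈ Finset.univ.filter (fun e : Fin k × Fin k => e.1 < e.2 ∧ F.Adj e.1 e.2),
    W (x e.1) (x e.2)

/-- The number of edges of a finite simple graph on `Fin k`. -/
noncomputable def edgeCount {k : ℕ} (F : SimpleGraph (Fin k)) : ℕ :=
  Set.ncard {e : Fin k × Fin k | e.1 < e.2 ∧ F.Adj e.1 e.2}

/-- `W : ℝ → ℝ → ℝ` is a graphon (on `[0,1]²`): Lebesgue measurable, symmetric,
with values in `[0,1]`. -/
def IsGraphon (W : ℝ → ℝ → ℝ) : Prop :=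
  NullMeasurable (fun z : ℝ × ℝ => W z.1 z.2) (volume : Measure (ℝ × ℝ)) ∧
    (∀ x y : ℝ, W x y = W y x) ∧ ∀ x y : ℝ, W x y ∈ Set.Icc (0 : ℝ) 1

namespace Stmt16Aux

lemma integrable_of_bdd {α : Type*} [MeasurableSpace α] {μ : Measure α} [IsFiniteMeasure μ]
    {f : α → ℝ} (hm : AEStronglyMeasurable f μ) {C : ℝ} (h : ∀ x, |f x| ≤ C) :
    Integrable f μ :=
  Integrable.mono' (integrable_const C) hm
    (Filter.Eventually.of_forall fun x => by simpa [Real.norm_eq_abs] using h x)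

lemma measurePreserving_comp_inj {ι κ α : Type*} [Fintype ι] [Fintype κ] [MeasurableSpace α]
    (μ : Measure α) [IsProbabilityMeasure μ] {f : κ → ι} (hf : Function.Injective f) :
    MeasurePreserving (fun x : ι → α => x ∘ f)
      (Measure.pi fun _ => μ) (Measure.pi fun _ => μ) := by
  classical
  have hmeas : Measurable (fun x : ι → α => x ∘ f) :=
    measurable_pi_lambda _ fun j => measurable_pi_apply (f j)
  refine ⟨hmeas, ?_⟩
  symm
  apply Measure.pi_eq
  intro s hs
  set t : ι → Set α := fun i => if h : ∃ j, f j = i then s h.choose else Set.univ with ht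
  have htm : ∀ i, MeasurableSet (t i) := by
    intro i
    rw [ht]
    dsimp only
    split
    · exact hs _
    · exact MeasurableSet.univ
  have hpre : (fun x : ι → α => x ∘ f) ⁻¹' (Set.pi Set.univ s) = Set.pi Set.univ t := by
    ext x
    simp only [Set.mem_preimage, Set.mem_pi, Set.mem_univ, true_implies, Function.comp_apply]
    constructor
    · intro hx i
      rw [ht]; dsimp only
      split
      · rename_i h
        have h2 := hx h.choose
        rwa [h.choose_spec] at h2
      · trivial
    · intro hx j
      have := hx (f j)
      rw [ht] at this; dsimp only at this
      rw [dif_pos ⟨j, rfl⟩] at this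
      have hcs : (⟨j, rfl⟩ : ∃ j', f j' = f j).choose = j :=
        hf (Exists.choose_spec (⟨j, rfl⟩ : ∃ j', f j' = f j))
      rwa [hcs] at this
  rw [Measure.map_apply hmeas (MeasurableSet.univ_pi hs), hpre, Measure.pi_pi]
  have h1 : ∀ i ∈ (Finset.univ : Finset ι), i ∉ Finset.univ.image f → μ (t i) = 1 := by
    intro i _ hi
    have : ¬ ∃ j, f j = i := by
      intro ⟨j, hj⟩
      exact hi (Finset.mem_image.2 ⟨j, Finset.mem_univ _, hj⟩)
    rw [ht]; dsimp only; rw [dif_neg this]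
    exact measure_univ
  rw [← Finset.prod_subset (Finset.subset_univ (Finset.univ.image f)) h1,
    Finset.prod_image (fun a _ b _ hab => hf hab)]
  refine Finset.prod_congr rfl fun j _ => ?_
  congr 1
  rw [ht]; dsimp only
  rw [dif_pos ⟨j, rfl⟩]
  have : (⟨j, rfl⟩ : ∃ j', f j' = f j).choose = j :=
    hf (Exists.choose_spec (⟨j, rfl⟩ : ∃ j', f j' = f j))
  rw [this]

lemma ae_comp {α β : Type*} [MeasurableSpace α] [MeasurableSpace β] {μ : Measure α}
    {ν : Measure β} {f : α → β} (h : MeasurePreserving f μ ν) {P : β → Prop}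
    (hP : ∀ᵐ y ∂ν, P y) : ∀ᵐ x ∂μ, P (f x) := by
  rw [ae_iff] at hP ⊢
  have hle := Measure.le_map_apply (μ := μ) h.measurable.aemeasurable {y | ¬ P y}
  rw [h.map_eq, hP] at hle
  exact le_antisymm hle zero_le

variable {k : ℕ} (μ : Measure ℝ) [IsProbabilityMeasure μ]

lemma pairMP {a b : Fin k} (hab : a ≠ b) :
    MeasurePreserving (fun x : Fin k → ℝ => (x a, x b))
      (Measure.pi fun _ : Fin k => μ) (μ.prod μ) := by
  have hι : Function.Injective ![a, b] := by
    intro i j hij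
    fin_cases i <;> fin_cases j <;> simp_all
  have h1 := measurePreserving_comp_inj (ι := Fin k) (κ := Fin 2) μ hι
  have h2 := measurePreserving_piFinTwo (fun _ : Fin 2 => μ)
  have h3 := h2.comp h1
  have heq : (fun x : Fin k → ℝ => (x a, x b)) =
      (MeasurableEquiv.piFinTwo fun _ : Fin 2 => ℝ) ∘ (fun x => x ∘ ![a, b]) := by
    funext x
    simp [MeasurableEquiv.piFinTwo_apply]
  rw [heq]
  exact h3

lemma restrict_cube (k : ℕ) :
    ((volume : Measure (Fin k → ℝ))).restrict (Set.univ.pi fun _ => Set.Icc (0:ℝ) 1) =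
      Measure.pi fun _ : Fin k => volume.restrict (Set.Icc (0:ℝ) 1) := by
  rw [MeasureTheory.volume_pi]
  symm
  apply Measure.pi_eq
  intro s hs
  rw [Measure.restrict_apply (MeasurableSet.univ_pi hs), ← Set.pi_inter_distrib,
    Measure.pi_pi]
  exact Finset.prod_congr rfl fun i _ => (Measure.restrict_apply (hs i)).symm

lemma shared_nonneg (G : ℝ × ℝ → ℝ) (hGm : Measurable G) (C : ℝ) (hGb : ∀ z, |G z| ≤ C)
    {v b d : Fin k} (hvb : v ≠ b) (hvd : v ≠ d) (hbd : b ≠ d) :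
    0 ≤ ∫ x, G (x v, x b) * G (x v, x d) ∂(Measure.pi fun _ : Fin k => μ) := by
  have hC0 : 0 ≤ C := le_trans (abs_nonneg _) (hGb (0, 0))
  set ι : Unit ⊕ Fin 2 → Fin k := Sum.elim (fun _ => v) ![b, d] with hιdef
  have hι : Function.Injective ι := by
    rintro (⟨⟩ | i) (⟨⟩ | j) h
    · rfl
    · exfalso
      fin_cases j
      · exact hvb h
      · exact hvd h
    · exfalso
      fin_cases i
      · exact hvb h.symm
      · exact hvd h.symm
    · fin_cases i <;> fin_cases j
      · rfl
      · exact absurd h hbd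
      · exact absurd h.symm hbd
      · rfl
  have h1 := measurePreserving_comp_inj (ι := Fin k) μ hι
  set H : ((Unit ⊕ Fin 2) → ℝ) → ℝ := fun y =>
    G (y (.inl ()), y (.inr 0)) * G (y (.inl ()), y (.inr 1)) with hHdef
  have hHm : Measurable H :=
    (hGm.comp ((measurable_pi_apply _).prodMk (measurable_pi_apply _))).mul
      (hGm.comp ((measurable_pi_apply _).prodMk (measurable_pi_apply _)))
  have hcomp : ∀ x : Fin k → ℝ, H (x ∘ ι) = G (x v, x b) * G (x v, x d) := by
    intro x
    simp [hHdef, hιdef]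
  have step1 : ∫ x, G (x v, x b) * G (x v, x d) ∂(Measure.pi fun _ : Fin k => μ) =
      ∫ y, H y ∂(Measure.pi fun _ : Unit ⊕ Fin 2 => μ) := by
    rw [← h1.map_eq, integral_map h1.measurable.aemeasurable hHm.aestronglyMeasurable]
    exact integral_congr_ae (Filter.Eventually.of_forall fun x => (hcomp x).symm)
  rw [step1]
  have h2 := measurePreserving_sumPiEquivProdPi (fun _ : Unit ⊕ Fin 2 => μ)
  set H' : (Unit → ℝ) × (Fin 2 → ℝ) → ℝ := fun z =>
    G (z.1 (), z.2 0) * G (z.1 (), z.2 1) with hH'def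
  have hH'm : Measurable H' :=
    (hGm.comp (((measurable_pi_apply _).comp measurable_fst).prodMk
      ((measurable_pi_apply _).comp measurable_snd))).mul
    (hGm.comp (((measurable_pi_apply _).comp measurable_fst).prodMk
      ((measurable_pi_apply _).comp measurable_snd)))
  have step2 : ∫ y, H y ∂(Measure.pi fun _ : Unit ⊕ Fin 2 => μ) =
      ∫ z, H' z ∂((Measure.pi fun _ : Unit => μ).prod (Measure.pi fun _ : Fin 2 => μ)) := by
    rw [← h2.integral_comp']
    rfl
  rw [step2]
  have hH'b : ∀ z, |H' z| ≤ C * C := by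
    intro z
    rw [hH'def]
    dsimp only
    rw [abs_mul]
    exact mul_le_mul (hGb _) (hGb _) (abs_nonneg _) hC0
  have hint : Integrable H'
      ((Measure.pi fun _ : Unit => μ).prod (Measure.pi fun _ : Fin 2 => μ)) :=
    integrable_of_bdd hH'm.aestronglyMeasurable hH'b
  rw [MeasureTheory.integral_prod _ hint]
  apply integral_nonneg
  intro u
  have h3 := measurePreserving_piFinTwo (fun _ : Fin 2 => μ)
  have step3 : ∫ w, H' (u, w) ∂(Measure.pi fun _ : Fin 2 => μ) =
      ∫ z : ℝ × ℝ, G (u (), z.1) * G (u (), z.2) ∂(μ.prod μ) := by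
    rw [← h3.integral_comp']
    rfl
  dsimp only
  rw [step3, MeasureTheory.integral_prod_mul (f := fun s => G (u (), s))
    (g := fun t => G (u (), t))]
  exact mul_self_nonneg _

lemma disj_nonneg (G : ℝ × ℝ → ℝ) (hGm : Measurable G) (C : ℝ) (hGb : ∀ z, |G z| ≤ C)
    {a b c d : Fin k} (hab : a ≠ b) (hcd : c ≠ d) (hac : a ≠ c)
    (had : a ≠ d) (hbc : b ≠ c) (hbd : b ≠ d) :
    0 ≤ ∫ x, G (x a, x b) * G (x c, x d) ∂(Measure.pi fun _ : Fin k => μ) := by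
  set ι : Fin 2 ⊕ Fin 2 → Fin k := Sum.elim ![a, b] ![c, d] with hιdef
  have hι : Function.Injective ι := by
    rintro (i | i) (j | j) h
    · fin_cases i <;> fin_cases j
      · rfl
      · exact absurd h hab
      · exact absurd h.symm hab
      · rfl
    · exfalso
      fin_cases i <;> fin_cases j
      · exact hac h
      · exact had h
      · exact hbc h
      · exact hbd h
    · exfalso
      fin_cases i <;> fin_cases j
      · exact hac h.symm
      · exact hbc h.symm
      · exact had h.symm
      · exact hbd h.symm
    · fin_cases i <;> fin_cases j
      · rfl
      · exact absurd h hcd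
      · exact absurd h.symm hcd
      · rfl
  have h1 := measurePreserving_comp_inj (ι := Fin k) μ hι
  set H : ((Fin 2 ⊕ Fin 2) → ℝ) → ℝ := fun y =>
    G (y (.inl 0), y (.inl 1)) * G (y (.inr 0), y (.inr 1)) with hHdef
  have hHm : Measurable H :=
    (hGm.comp ((measurable_pi_apply _).prodMk (measurable_pi_apply _))).mul
      (hGm.comp ((measurable_pi_apply _).prodMk (measurable_pi_apply _)))
  have hcomp : ∀ x : Fin k → ℝ, H (x ∘ ι) = G (x a, x b) * G (x c, x d) := by
    intro x
    simp [hHdef, hιdef]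
  have step1 : ∫ x, G (x a, x b) * G (x c, x d) ∂(Measure.pi fun _ : Fin k => μ) =
      ∫ y, H y ∂(Measure.pi fun _ : Fin 2 ⊕ Fin 2 => μ) := by
    rw [← h1.map_eq, integral_map h1.measurable.aemeasurable hHm.aestronglyMeasurable]
    exact integral_congr_ae (Filter.Eventually.of_forall fun x => (hcomp x).symm)
  rw [step1]
  have h2 := measurePreserving_sumPiEquivProdPi (fun _ : Fin 2 ⊕ Fin 2 => μ)
  have step2 : ∫ y, H y ∂(Measure.pi fun _ : Fin 2 ⊕ Fin 2 => μ) =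
      ∫ z, (fun w : Fin 2 → ℝ => G (w 0, w 1)) z.1 * (fun w : Fin 2 → ℝ => G (w 0, w 1)) z.2
        ∂((Measure.pi fun _ : Fin 2 => μ).prod (Measure.pi fun _ : Fin 2 => μ)) := by
    rw [← h2.integral_comp']
    rfl
  rw [step2, MeasureTheory.integral_prod_mul (f := fun w : Fin 2 → ℝ => G (w 0, w 1))
    (g := fun w : Fin 2 → ℝ => G (w 0, w 1))]
  exact mul_self_nonneg _

end Stmt16Aux

/-- **Lemma.** Let `F` be a graph on `{1,…,k}` with `e(F) > 0`, let `0 < p ≤ 1` and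
let `W` be a graphon. If `Ψ_{F,W} = p^{e(F)}` a.e. on `[0,1]^k`, then `W = p` a.e.
on `[0,1]²`. -/
theorem stmt16 (k : ℕ) (F : SimpleGraph (Fin k)) (hF : 0 < edgeCount F)
    (p : ℝ) (hp0 : 0 < p) (hp1 : p ≤ 1)
    (W : ℝ → ℝ → ℝ) (hW : IsGraphon W)
    (hae : ∀ᵐ x ∂((volume : Measure (Fin k → ℝ)).restrict
        (Set.univ.pi fun _ : Fin k => Set.Icc (0 : ℝ) 1)),
      psi F W x = p ^ edgeCount F) :
    ∀ᵐ z ∂((volume : Measure (ℝ × ℝ)).restrict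
        (Set.Icc (0 : ℝ) 1 ×ˢ Set.Icc (0 : ℝ) 1)), W z.1 z.2 = p := by
  classical
  -- measures
  haveI hIprob : IsProbabilityMeasure (volume.restrict (Set.Icc (0:ℝ) 1)) :=
    ⟨by simp [Real.volume_Icc]⟩
  rw [Stmt16Aux.restrict_cube k] at hae
  set μ : Measure ℝ := volume.restrict (Set.Icc (0:ℝ) 1) with hμdef
  set π : Measure (Fin k → ℝ) := Measure.pi fun _ : Fin k => μ with hπdef
  haveI : IsProbabilityMeasure μ := hIprob
  have hprodres : μ.prod μ = (volume : Measure (ℝ × ℝ)).restrict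
      (Set.Icc (0:ℝ) 1 ×ˢ Set.Icc (0:ℝ) 1) := by
    rw [hμdef, Measure.prod_restrict, ← Measure.volume_eq_prod]
  have hac2 : μ.prod μ ≪ (volume : Measure (ℝ × ℝ)) := by
    refine Measure.absolutelyContinuous_of_le ?_
    rw [hprodres]
    exact Measure.restrict_le_self
  -- edge set
  set E : Finset (Fin k × Fin k) :=
    Finset.univ.filter (fun e : Fin k × Fin k => e.1 < e.2 ∧ F.Adj e.1 e.2) with hEdef
  have hEcard : E.card = edgeCount F := by
    have h1 : {e : Fin k × Fin k | e.1 < e.2 ∧ F.Adj e.1 e.2} = ↑E := by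
      ext e; simp [hEdef]
    rw [edgeCount, h1, Set.ncard_coe_finset]
  have hEmem : ∀ e ∈ E, e.1 < e.2 := fun e he => ((Finset.mem_filter.1 he).2).1
  have hpsiE : ∀ x : Fin k → ℝ, psi F W x = ∏ e ∈ E, W (x e.1) (x e.2) := by
    intro x
    unfold psi
    exact Finset.prod_congr (Finset.filter_congr_decidable _ _ _) fun _ _ => rfl
  set N : ℕ := edgeCount F with hNdef
  set q : ℝ := p ^ N with hqdef
  have hq0 : 0 < q := pow_pos hp0 N
  have hq1 : q ≤ 1 := pow_le_one₀ hp0.le hp1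
  -- measurable symmetric representative V of W
  have hWa : AEMeasurable (fun z : ℝ × ℝ => W z.1 z.2) volume := hW.1.aemeasurable
  set W₀ : ℝ × ℝ → ℝ := hWa.mk _ with hW₀def
  have hW₀m : Measurable W₀ := hWa.measurable_mk
  have hW₀eq : (fun z : ℝ × ℝ => W z.1 z.2) =ᵐ[volume] W₀ := hWa.ae_eq_mk
  set V : ℝ × ℝ → ℝ := fun z => min 1 (max ((W₀ z + W₀ z.swap) / 2) 0) with hVdef
  have hVm : Measurable V := by
    apply Measurable.min measurable_const
    apply Measurable.max _ measurable_const
    exact (hW₀m.add (hW₀m.comp measurable_swap)).div_const 2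
  have hV01 : ∀ z, V z ∈ Set.Icc (0:ℝ) 1 := by
    intro z
    constructor
    · exact le_min zero_le_one (le_max_right _ _)
    · exact min_le_left _ _
  have hVsym : ∀ u v : ℝ, V (u, v) = V (v, u) := by
    intro u v
    simp only [hVdef, Prod.swap_prod_mk]
    rw [add_comm]
  -- V = W a.e. on ℝ²
  have hswapMP : MeasurePreserving (Prod.swap : ℝ × ℝ → ℝ × ℝ)
      (volume : Measure (ℝ × ℝ)) (volume : Measure (ℝ × ℝ)) := by
    rw [Measure.volume_eq_prod]
    exact Measure.measurePreserving_swap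
  have hswap_eq : (fun z : ℝ × ℝ => W z.1 z.2) =ᵐ[volume] (fun z => W₀ z.swap) := by
    have h1 : ∀ᵐ z : ℝ × ℝ ∂volume, W (z.swap).1 (z.swap).2 = W₀ z.swap :=
      Stmt16Aux.ae_comp hswapMP hW₀eq
    refine h1.mono fun z hz => ?_
    show W z.1 z.2 = W₀ z.swap
    simp only [Prod.fst_swap, Prod.snd_swap] at hz
    rw [← hz]
    exact hW.2.1 z.1 z.2
  have hVW : (fun z : ℝ × ℝ => W z.1 z.2) =ᵐ[volume] V := by
    refine (hW₀eq.and hswap_eq).mono fun z ⟨h1, h2⟩ => ?_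
    have h1' : W z.1 z.2 = W₀ z := h1
    have h2' : W z.1 z.2 = W₀ z.swap := h2
    have hb := hW.2.2 z.1 z.2
    show W z.1 z.2 = V z
    simp only [hVdef]
    rw [← h1', ← h2']
    have : (W z.1 z.2 + W z.1 z.2) / 2 = W z.1 z.2 := by ring
    rw [this, max_eq_left hb.1, min_eq_right hb.2]
  have hVW2 : (fun z : ℝ × ℝ => W z.1 z.2) =ᵐ[μ.prod μ] V := hVW.filter_mono hac2.ae_le
  -- transfer to π at pairs
  have hVpair : ∀ a b : Fin k, a ≠ b →
      ∀ᵐ x ∂π, W (x a) (x b) = V (x a, x b) := by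
    intro a b hab
    exact Stmt16Aux.ae_comp (Stmt16Aux.pairMP μ hab) hVW2
  have hallpairs : ∀ᵐ x ∂π, ∀ e : Fin k × Fin k, e ∈ E → W (x e.1) (x e.2) = V (x e.1, x e.2) := by
    rw [ae_all_iff]
    intro e
    by_cases he : e ∈ E
    · exact (hVpair e.1 e.2 (ne_of_lt (hEmem e he))).mono fun x hx _ => hx
    · exact Filter.Eventually.of_forall fun x hx => absurd hx he
  have hprodV : ∀ᵐ x ∂π, ∏ e ∈ E, V (x e.1, x e.2) = q := by
    refine (hae.and hallpairs).mono fun x ⟨h1, h2⟩ => ?_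
    rw [hpsiE x] at h1
    rw [← Finset.prod_congr rfl h2, h1]
  -- each factor is ≥ q a.e.
  have hfac : ∀ᵐ x ∂π, ∀ e ∈ E, q ≤ V (x e.1, x e.2) := by
    refine hprodV.mono fun x hx e he => ?_
    have h1 : V (x e.1, x e.2) * ∏ f ∈ E.erase e, V (x f.1, x f.2) = q := by
      rw [Finset.mul_prod_erase E (fun f => V (x f.1, x f.2)) he, hx]
    have h2 : ∏ f ∈ E.erase e, V (x f.1, x f.2) ≤ 1 :=
      Finset.prod_le_one (fun f _ => (hV01 _).1) (fun f _ => (hV01 _).2)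
    calc q = V (x e.1, x e.2) * ∏ f ∈ E.erase e, V (x f.1, x f.2) := h1.symm
      _ ≤ V (x e.1, x e.2) := mul_le_of_le_one_right (hV01 _).1 h2
  -- the function G
  set G : ℝ × ℝ → ℝ := fun z => Real.log (max (V z) q) - Real.log p with hGdef
  have hGm : Measurable G := (Real.measurable_log.comp (hVm.max measurable_const)).sub
    measurable_const
  have hGsym : ∀ u v : ℝ, G (u, v) = G (v, u) := by
    intro u v
    simp only [hGdef]
    rw [hVsym]
  set C : ℝ := |Real.log q| + |Real.log p| with hCdef
  have hGb : ∀ z, |G z| ≤ C := by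
    intro z
    have h2 : max (V z) q ≤ 1 := max_le (hV01 z).2 hq1
    have h3 : Real.log (max (V z) q) ≤ 0 :=
      Real.log_nonpos (le_of_lt (lt_of_lt_of_le hq0 (le_max_right _ _))) h2
    have h4 : Real.log q ≤ Real.log (max (V z) q) :=
      (Real.log_le_log_iff hq0 (lt_of_lt_of_le hq0 (le_max_right _ _))).2 (le_max_right _ _)
    have h5 : |Real.log (max (V z) q)| ≤ |Real.log q| := by
      rw [abs_of_nonpos h3, abs_of_nonpos (Real.log_nonpos hq0.le hq1)]
      linarith
    calc |G z| ≤ |Real.log (max (V z) q)| + |Real.log p| := abs_sub _ _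
      _ ≤ C := by rw [hCdef]; linarith
  have hC0 : 0 ≤ C := le_trans (abs_nonneg _) (hGb (0, 0))
  -- the sum is zero a.e.
  have hsum0 : ∀ᵐ x ∂π, ∑ e ∈ E, G (x e.1, x e.2) = 0 := by
    refine (hprodV.and hfac).mono fun x ⟨hx, hf⟩ => ?_
    have hmax : ∀ e ∈ E, (fun e => G (x e.1, x e.2)) e =
        Real.log (V (x e.1, x e.2)) - Real.log p := by
      intro e he
      simp only [hGdef]
      rw [max_eq_left (hf e he)]
    rw [Finset.sum_congr rfl hmax, Finset.sum_sub_distrib, Finset.sum_const,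
      ← Real.log_prod (fun e he => (lt_of_lt_of_le hq0 (hf e he)).ne'), hx,
      hqdef, Real.log_pow, hEcard]
    simp [nsmul_eq_mul]
  -- integrability
  have hterm_meas : ∀ e : Fin k × Fin k, Measurable fun x : Fin k → ℝ => G (x e.1, x e.2) :=
    fun e => hGm.comp ((measurable_pi_apply _).prodMk (measurable_pi_apply _))
  haveI : IsProbabilityMeasure π := by rw [hπdef]; infer_instance
  have hterm_int : ∀ e f : Fin k × Fin k,
      Integrable (fun x => G (x e.1, x e.2) * G (x f.1, x f.2)) π := by
    intro e f
    refine Stmt16Aux.integrable_of_bdd ((hterm_meas e).mul (hterm_meas f)).aestronglyMeasurable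
      (C := C * C) fun x => ?_
    rw [abs_mul]
    exact mul_le_mul (hGb _) (hGb _) (abs_nonneg _) hC0
  -- nonnegativity of each cross term
  have hJnonneg : ∀ e ∈ E, ∀ f ∈ E,
      0 ≤ ∫ x, G (x e.1, x e.2) * G (x f.1, x f.2) ∂π := by
    intro e he f hf
    obtain ⟨a, b⟩ := e
    obtain ⟨c, d⟩ := f
    have hab : a < b := hEmem _ he
    have hcd : c < d := hEmem _ hf
    simp only
    by_cases hac : a = c
    · subst hac
      by_cases hbd : b = d
      · subst hbd
        exact integral_nonneg fun x => mul_self_nonneg _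
      · exact Stmt16Aux.shared_nonneg μ G hGm C hGb (ne_of_lt hab) (ne_of_lt hcd) hbd
    · by_cases had : a = d
      · subst had
        have hrw : (fun x : Fin k → ℝ => G (x a, x b) * G (x c, x a)) =
            fun x => G (x a, x b) * G (x a, x c) := by
          funext x; rw [hGsym (x c) (x a)]
        rw [hrw]
        exact Stmt16Aux.shared_nonneg μ G hGm C hGb (ne_of_lt hab)
          (fun h => hac h) (fun h => (ne_of_lt (lt_trans hcd hab)).symm h)
      · by_cases hbc : b = c
        · subst hbc
          have hrw : (fun x : Fin k → ℝ => G (x a, x b) * G (x b, x d)) =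
              fun x => G (x b, x a) * G (x b, x d) := by
            funext x; rw [hGsym (x a) (x b)]
          rw [hrw]
          exact Stmt16Aux.shared_nonneg μ G hGm C hGb (ne_of_lt hab).symm
            (ne_of_lt hcd) (ne_of_lt (lt_trans hab hcd))
        · by_cases hbd : b = d
          · subst hbd
            have hrw : (fun x : Fin k → ℝ => G (x a, x b) * G (x c, x b)) =
                fun x => G (x b, x a) * G (x b, x c) := by
              funext x; rw [hGsym (x a) (x b), hGsym (x c) (x b)]
            rw [hrw]
            exact Stmt16Aux.shared_nonneg μ G hGm C hGb (ne_of_lt hab).symm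
              (ne_of_lt hcd).symm (fun h => hac h)
          · exact Stmt16Aux.disj_nonneg μ G hGm C hGb (ne_of_lt hab) (ne_of_lt hcd)
              hac had hbc hbd
  -- the double sum of integrals is zero
  have hS20 : ∫ x, (∑ e ∈ E, G (x e.1, x e.2)) * (∑ f ∈ E, G (x f.1, x f.2)) ∂π = 0 := by
    have h0 : (fun x => (∑ e ∈ E, G (x e.1, x e.2)) * (∑ f ∈ E, G (x f.1, x f.2)))
        =ᵐ[π] (fun _ => (0:ℝ)) := hsum0.mono fun x hx => by
      show (∑ e ∈ E, G (x e.1, x e.2)) * (∑ f ∈ E, G (x f.1, x f.2)) = 0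
      rw [hx, zero_mul]
    rw [integral_congr_ae h0, integral_zero]
  have hJsum : ∑ e ∈ E, ∑ f ∈ E,
      (∫ x, G (x e.1, x e.2) * G (x f.1, x f.2) ∂π) = 0 := by
    calc ∑ e ∈ E, ∑ f ∈ E, (∫ x, G (x e.1, x e.2) * G (x f.1, x f.2) ∂π)
        = ∑ e ∈ E, ∫ x, ∑ f ∈ E, G (x e.1, x e.2) * G (x f.1, x f.2) ∂π :=
          Finset.sum_congr rfl fun e _ =>
            (integral_finset_sum E fun f _ => hterm_int e f).symm
      _ = ∫ x, ∑ e ∈ E, ∑ f ∈ E, G (x e.1, x e.2) * G (x f.1, x f.2) ∂π :=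
          (integral_finset_sum E fun e _ =>
            integrable_finset_sum E fun f _ => hterm_int e f).symm
      _ = ∫ x, (∑ e ∈ E, G (x e.1, x e.2)) * (∑ f ∈ E, G (x f.1, x f.2)) ∂π := by
          refine integral_congr_ae (Filter.Eventually.of_forall fun x => ?_)
          exact (Finset.sum_mul_sum E E (fun e => G (x e.1, x e.2))
            (fun f => G (x f.1, x f.2))).symm
      _ = 0 := hS20
  -- pick an edge
  have hEne : E.Nonempty := Finset.card_pos.1 (by rw [hEcard]; exact hF)
  obtain ⟨e₀, he₀⟩ := hEne
  have hJ00 : ∫ x, G (x e₀.1, x e₀.2) * G (x e₀.1, x e₀.2) ∂π = 0 := by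
    have h1 := (Finset.sum_eq_zero_iff_of_nonneg
      (fun e he => Finset.sum_nonneg fun f hf => hJnonneg e he f hf)).1 hJsum e₀ he₀
    exact (Finset.sum_eq_zero_iff_of_nonneg fun f hf => hJnonneg e₀ he₀ f hf).1 h1 e₀ he₀
  -- conclude G = 0 a.e. along the pair, then on the square
  have hGpair0 : ∀ᵐ x ∂π, G (x e₀.1, x e₀.2) = 0 := by
    have hnn : (0:(Fin k → ℝ) → ℝ) ≤ᵐ[π] fun x => G (x e₀.1, x e₀.2) * G (x e₀.1, x e₀.2) :=
      Filter.Eventually.of_forall fun x => mul_self_nonneg _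
    have h2 := (integral_eq_zero_iff_of_nonneg_ae hnn (hterm_int e₀ e₀)).1 hJ00
    exact h2.mono fun x hx => mul_self_eq_zero.1 hx
  have he₀ne : e₀.1 ≠ e₀.2 := ne_of_lt (hEmem _ he₀)
  have hMP := Stmt16Aux.pairMP (k := k) μ he₀ne
  have push : ∀ (P : ℝ × ℝ → Prop), MeasurableSet {z | P z} →
      (∀ᵐ x ∂π, P (x e₀.1, x e₀.2)) → ∀ᵐ z ∂(μ.prod μ), P z := by
    intro P hPm hQ
    rw [ae_iff] at hQ ⊢
    have hcompl : {z : ℝ × ℝ | ¬ P z} = {z | P z}ᶜ := rfl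
    rw [hcompl, ← hMP.map_eq, Measure.map_apply hMP.measurable hPm.compl]
    exact hQ
  have hG0 : ∀ᵐ z ∂(μ.prod μ), G z = 0 := by
    refine push (fun z => G z = 0) ?_ hGpair0
    exact hGm (measurableSet_singleton 0)
  have hVq : ∀ᵐ z ∂(μ.prod μ), q ≤ V z := by
    refine push (fun z => q ≤ V z) (measurableSet_le measurable_const hVm) ?_
    exact hfac.mono fun x hx => hx e₀ he₀
  -- finish
  rw [← hprodres]
  refine ((hVW2.and hG0).and hVq).mono fun z ⟨⟨h1, h2⟩, h3⟩ => ?_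
  have h1' : W z.1 z.2 = V z := h1
  simp only [hGdef] at h2
  rw [max_eq_left h3, sub_eq_zero] at h2
  have hVpos : 0 < V z := lt_of_lt_of_le hq0 h3
  have hVp : V z = p := by
    have h4 := congrArg Real.exp h2
    rwa [Real.exp_log hVpos, Real.exp_log hp0] at h4
  rw [h1', hVp]
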